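/- arXiv:2407.09087 — 6 statements merged into one kernel-verified Lean document; each statement's English description precedes it below -/
import Mathlib

section
/- Suppose M(x₁,x₂) > 0 implies y₁(x₁) = y₂(x₂). If every block of the partition S is label-pure, i.e. each Sᵢ is contained in a single fiber of y₂, then the mask-induced error vanishes: α(S) = 0. In particular α(S^y) = 0 for the label partition S^y. -/
open Finset

/-- The augmentation weight induced by masked image modeling with discrete
tokenization given by a partition `S` of `X₂`. -/
noncomputable def augWeight {X₁ X₂ : Type*} [Fintype X₁] [Fintype X₂] [DecidableEq X₂]
    (M : X₁ → X₂ → ℝ) (S : Finpartition (univ : Finset X₂)) (x₁ x₁' : X₁) : ℝ :=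
  ∑ p ∈ S.parts,
    (∑ x₂ ∈ p, M x₁ x₂) * (∑ x₂ ∈ p, M x₁' x₂) / (∑ x, ∑ x₂ ∈ p, M x x₂)

/-- The mask-induced error `α(S) = Σ_{(x₁,x₁') : y₁(x₁) ≠ y₁(x₁')} A_S(x₁, x₁')`. -/
noncomputable def maskError {X₁ X₂ Y : Type*} [Fintype X₁] [Fintype X₂] [DecidableEq X₂]
    [DecidableEq Y] (M : X₁ → X₂ → ℝ) (S : Finpartition (univ : Finset X₂))
    (y₁ : X₁ → Y) : ℝ :=
  ∑ x₁, ∑ x₁', if y₁ x₁ ≠ y₁ x₁' then augWeight M S x₁ x₁' else 0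

/-- The label partition `S^y`: the partition of `X₂` into the fibers of `y₂`. -/
def labelPartition {X₂ Y : Type*} [Fintype X₂] [DecidableEq X₂] [DecidableEq Y]
    (y₂ : X₂ → Y) : Finpartition (univ : Finset X₂) :=
  haveI : DecidableRel (Setoid.ker y₂).r := fun a b => inferInstanceAs (Decidable (y₂ a = y₂ b))
  Finpartition.ofSetoid (Setoid.ker y₂)

lemma maskError_eq_zero_aux {X₁ X₂ Y : Type*} [Fintype X₁] [Fintype X₂]
    [DecidableEq X₂] [DecidableEq Y]
    (M : X₁ → X₂ → ℝ)
    (hM : ∀ x₁ x₂, 0 ≤ M x₁ x₂)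
    (y₁ : X₁ → Y) (y₂ : X₂ → Y)
    (hcompat : ∀ x₁ x₂, 0 < M x₁ x₂ → y₁ x₁ = y₂ x₂)
    (S : Finpartition (univ : Finset X₂))
    (hpure : ∀ p ∈ S.parts, ∃ k : Y, ∀ x₂ ∈ p, y₂ x₂ = k) :
    maskError M S y₁ = 0 := by
  unfold maskError
  refine Finset.sum_eq_zero fun x₁ _ => Finset.sum_eq_zero fun x₁' _ => ?_
  split_ifs with h
  · unfold augWeight
    refine Finset.sum_eq_zero fun p hp => ?_
    obtain ⟨k, hk⟩ := hpure p hp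
    -- claim: one of the two numerator sums is zero
    have key : ∀ x : X₁, y₁ x ≠ k → ∑ x₂ ∈ p, M x x₂ = 0 := by
      intro x hx
      refine Finset.sum_eq_zero fun x₂ hx₂ => ?_
      by_contra hne
      have hpos : 0 < M x x₂ := lt_of_le_of_ne (hM x x₂) (Ne.symm hne)
      exact hx ((hcompat x x₂ hpos).trans (hk x₂ hx₂))
    rcases eq_or_ne (y₁ x₁) k with h1 | h1
    · have h2 : y₁ x₁' ≠ k := fun h2 => h (h1.trans h2.symm)
      rw [key x₁' h2, mul_zero, zero_div]
    · rw [key x₁ h1, zero_mul, zero_div]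
  · rfl

/-- If `M(x₁,x₂) > 0` implies `y₁(x₁) = y₂(x₂)` and every block of the partition `S`
is label-pure (contained in a single fiber of `y₂`), then the mask-induced error
vanishes: `α(S) = 0`.  In particular, `α(S^y) = 0` for the label partition `S^y`. -/
theorem maskError_eq_zero_of_labelPure {X₁ X₂ Y : Type*} [Fintype X₁] [Fintype X₂] [Fintype Y]
    [DecidableEq X₂] [DecidableEq Y]
    (M : X₁ → X₂ → ℝ)
    (hM : ∀ x₁ x₂, 0 ≤ M x₁ x₂)
    (hsum : ∑ x₁, ∑ x₂, M x₁ x₂ = 1)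
    (y₁ : X₁ → Y) (y₂ : X₂ → Y)
    (hcompat : ∀ x₁ x₂, 0 < M x₁ x₂ → y₁ x₁ = y₂ x₂)
    (S : Finpartition (univ : Finset X₂))
    (hw : ∀ p ∈ S.parts, 0 < ∑ x₁, ∑ x₂ ∈ p, M x₁ x₂)
    (hpure : ∀ p ∈ S.parts, ∃ k : Y, ∀ x₂ ∈ p, y₂ x₂ = k) :
    maskError M S y₁ = 0 ∧ maskError M (labelPartition y₂) y₁ = 0 := by
  constructor
  · exact maskError_eq_zero_aux M hM y₁ y₂ hcompat S hpure
  · refine maskError_eq_zero_aux M hM y₁ y₂ hcompat _ fun p hp => ?_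
    obtain ⟨a, ha⟩ := Finpartition.nonempty_of_mem_parts _ hp
    refine ⟨y₂ a, fun b hb => ?_⟩
    have hpart : (labelPartition y₂).part a = p :=
      Finpartition.part_eq_of_mem _ hp ha
    have hmem : b ∈ (labelPartition y₂).part a := by rw [hpart]; exact hb
    have : (Setoid.ker y₂).r a b := by
      revert hmem; unfold labelPartition
      exact (@Finpartition.mem_part_ofSetoid_iff_rel X₂ _ a _ (Setoid.ker y₂)
        (fun a b => inferInstanceAs (Decidable (y₂ a = y₂ b))) b).mp
    exact this.symm
end

section
/- Suppose M(x₁,x₂) > 0 implies y₁(x₁) = y₂(x₂). For the label partition S^y (assumed to have all blocks of positive mass), the squared Frobenius norm of the normalized adjacency matrix, which equals the sum of squared eigenvalues Σᵢ λᵢ², satisfies ‖Ā_{S^y}‖_F² = c, where c is the number of label classes of positive mass, i.e. c = #{k ∈ Y : Σ_{x₁ : y₁(x₁)=k} w(x₁) > 0}. -/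
open Finset

/-- The normalized adjacency matrix
`Ā_S(x₁,x₁') = A_S(x₁,x₁') / √(w(x₁) · w(x₁'))` with `w(x₁) = Σ_{x₂} M(x₁,x₂)`. -/
noncomputable def normAdj {X₁ X₂ : Type*} [Fintype X₁] [Fintype X₂] [DecidableEq X₂]
    (M : X₁ → X₂ → ℝ) (S : Finpartition (univ : Finset X₂)) (x₁ x₁' : X₁) : ℝ :=
  augWeight M S x₁ x₁' / Real.sqrt ((∑ x₂, M x₁ x₂) * (∑ x₂, M x₁' x₂))

theorem labelPartition_parts {X₂ Y : Type*} [Fintype X₂] [DecidableEq X₂] [DecidableEq Y]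
    (y₂ : X₂ → Y) :
    (labelPartition y₂).parts = univ.image fun a => univ.filter fun b => y₂ a = y₂ b := rfl

/-- Suppose `M(x₁,x₂) > 0` implies `y₁(x₁) = y₂(x₂)`.  For the label partition `S^y`
(with all blocks of positive mass), the squared Frobenius norm of the normalized
adjacency matrix (= the sum of squared eigenvalues `Σᵢ λᵢ²`) equals the number of
label classes of positive mass. -/
theorem frobSq_labelPartition {X₁ X₂ Y : Type*} [Fintype X₁] [Fintype X₂] [Fintype Y]
    [DecidableEq X₂] [DecidableEq Y]
    (M : X₁ → X₂ → ℝ)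
    (hM : ∀ x₁ x₂, 0 ≤ M x₁ x₂)
    (hsum : ∑ x₁, ∑ x₂, M x₁ x₂ = 1)
    (hmarg : ∀ x₁, 0 < ∑ x₂, M x₁ x₂)
    (y₁ : X₁ → Y) (y₂ : X₂ → Y)
    (hcompat : ∀ x₁ x₂, 0 < M x₁ x₂ → y₁ x₁ = y₂ x₂)
    (hwy : ∀ p ∈ (labelPartition y₂).parts, 0 < ∑ x₁, ∑ x₂ ∈ p, M x₁ x₂) :
    ∑ x₁, ∑ x₁', (normAdj M (labelPartition y₂) x₁ x₁') ^ 2 =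
      ((univ.filter fun k : Y =>
        0 < ∑ x₁ ∈ univ.filter fun x₁ => y₁ x₁ = k, ∑ x₂, M x₁ x₂).card : ℝ) := by
  classical
  set w : X₁ → ℝ := fun x => ∑ x₂, M x x₂ with hw_def
  set W : Y → ℝ := fun k => ∑ x₁ ∈ univ.filter fun x₁ => y₁ x₁ = k, w x₁ with hW_def
  have hwpos : ∀ x, 0 < w x := hmarg
  -- M vanishes off the fiber of y₁ x
  have hM0 : ∀ (x : X₁) (x₂ : X₂), y₂ x₂ ≠ y₁ x → M x x₂ = 0 := by
    intro x x₂ h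
    by_contra hne
    exact h ((hcompat x x₂ (lt_of_le_of_ne (hM x x₂) (Ne.symm hne))).symm)
  -- partial sums over a fiber
  have key : ∀ (a : X₂) (x : X₁),
      (∑ x₂ ∈ univ.filter fun b => y₂ a = y₂ b, M x x₂) = if y₁ x = y₂ a then w x else 0 := by
    intro a x
    by_cases h : y₁ x = y₂ a
    · simp only [h, if_true, hw_def]
      rw [Finset.sum_filter]
      refine Finset.sum_congr rfl fun x₂ _ => ?_
      by_cases h2 : y₂ a = y₂ x₂
      · simp [h2]
      · simp [h2, hM0 x x₂ (by rw [h]; exact fun hh => h2 hh.symm)]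
    · refine (Finset.sum_eq_zero fun x₂ hx₂ => ?_).trans (by simp [h])
      rw [Finset.mem_filter] at hx₂
      exact hM0 x x₂ (by rw [← hx₂.2]; exact fun hh => h hh.symm)
  -- total mass of the fiber of a
  have keyW : ∀ a : X₂, (∑ x, ∑ x₂ ∈ univ.filter fun b => y₂ a = y₂ b, M x x₂) = W (y₂ a) := by
    intro a
    simp only [key, hW_def]
    rw [Finset.sum_filter]
  have hWpos : ∀ x : X₁, 0 < W (y₁ x) := by
    intro x
    refine lt_of_lt_of_le (hwpos x) ?_
    refine Finset.single_le_sum (f := fun x₁ => w x₁) (fun i _ => (hwpos i).le) ?_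
    simp
  -- explicit formula for augWeight
  have hA : ∀ x x' : X₁, augWeight M (labelPartition y₂) x x' =
      if y₁ x = y₁ x' then w x * w x' / W (y₁ x) else 0 := by
    intro x x'
    rw [augWeight, labelPartition_parts]
    by_cases h : y₁ x = y₁ x'
    · -- find a witness x₂0 with positive mass
      have hex : ∃ x₂0, 0 < M x x₂0 := by
        by_contra hno
        push_neg at hno
        have : w x = 0 := Finset.sum_eq_zero fun x₂ _ => le_antisymm (hno x₂) (hM x x₂)
        exact absurd this (ne_of_gt (hwpos x))
      obtain ⟨x₂0, hx₂0⟩ := hex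
      have hy0 : y₂ x₂0 = y₁ x := (hcompat x x₂0 hx₂0).symm
      rw [if_pos h]
      rw [Finset.sum_eq_single_of_mem (univ.filter fun b => y₂ x₂0 = y₂ b)
        (Finset.mem_image_of_mem (fun a => univ.filter fun b => y₂ a = y₂ b)
          (Finset.mem_univ x₂0))]
      · rw [key, key, keyW, if_pos hy0.symm, if_pos (h.symm.trans hy0.symm), hy0]
      · intro q hq hqne
        rw [Finset.mem_image] at hq
        obtain ⟨a, _, rfl⟩ := hq
        have hya : y₂ a ≠ y₂ x₂0 := by
          intro hcontra
          apply hqne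
          apply Finset.filter_congr
          intro b _
          simp [hcontra]
        rw [key, if_neg (by rw [← hy0] at *; exact fun hh => hya (hh ▸ hy0 ▸ rfl))]
        · simp
    · rw [if_neg h]
      refine Finset.sum_eq_zero fun q hq => ?_
      rw [Finset.mem_image] at hq
      obtain ⟨a, _, rfl⟩ := hq
      by_cases h1 : y₁ x = y₂ a
      · rw [key a x', if_neg (fun hh => h (h1.trans hh.symm)), mul_zero, zero_div]
      · rw [key a x, if_neg h1, zero_mul, zero_div]
  -- explicit formula for normAdj squared
  have hN : ∀ x x' : X₁, (normAdj M (labelPartition y₂) x x') ^ 2 =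
      if y₁ x = y₁ x' then w x * w x' / (W (y₁ x)) ^ 2 else 0 := by
    intro x x'
    rw [normAdj, div_pow, Real.sq_sqrt (mul_nonneg (hwpos x).le (hwpos x').le), hA]
    by_cases h : y₁ x = y₁ x'
    · rw [if_pos h, if_pos h, div_pow]
      rw [div_div]
      rw [mul_pow]
      have hx := ne_of_gt (hwpos x)
      have hx' := ne_of_gt (hwpos x')
      have hW := ne_of_gt (hWpos x)
      field_simp
    · simp [h]
  simp only [hN]
  -- inner sum over x'
  have inner : ∀ x : X₁,
      (∑ x', if y₁ x = y₁ x' then w x * w x' / (W (y₁ x)) ^ 2 else 0) = w x / W (y₁ x) := by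
    intro x
    have : ∀ x' : X₁, (if y₁ x = y₁ x' then w x * w x' / (W (y₁ x)) ^ 2 else 0)
        = if y₁ x' = y₁ x then w x / (W (y₁ x)) ^ 2 * w x' else 0 := by
      intro x'
      by_cases h : y₁ x = y₁ x'
      · rw [if_pos h, if_pos h.symm]; ring
      · rw [if_neg h, if_neg fun hh => h hh.symm]
    simp only [this]
    rw [← Finset.sum_filter, ← Finset.mul_sum]
    have : (∑ x' ∈ univ.filter fun x' => y₁ x' = y₁ x, w x') = W (y₁ x) := rfl
    rw [this]
    have hW := ne_of_gt (hWpos x)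
    field_simp
  simp only [inner]
  -- group by label class
  rw [← Finset.sum_fiberwise (univ : Finset X₁) y₁ (fun x => w x / W (y₁ x))]
  rw [Finset.card_filter]
  push_cast
  refine Finset.sum_congr rfl fun k _ => ?_
  have hfib : (∑ x ∈ univ.filter fun x => y₁ x = k, w x / W (y₁ x))
      = (∑ x ∈ univ.filter fun x => y₁ x = k, w x) / W k := by
    rw [Finset.sum_div]
    refine Finset.sum_congr rfl fun x hx => ?_
    rw [Finset.mem_filter] at hx
    rw [hx.2]
  rw [hfib]
  by_cases hk : 0 < W k
  · rw [if_pos (by exact hk)]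
    have : (∑ x ∈ univ.filter fun x => y₁ x = k, w x) = W k := rfl
    rw [this, div_self (ne_of_gt hk)]
  · rw [if_neg (by exact hk)]
    have hempty : (univ.filter fun x : X₁ => y₁ x = k) = ∅ := by
      rw [Finset.filter_eq_empty_iff]
      intro x _ hx
      exact hk (hx ▸ hWpos x)
    rw [hempty]
    simp
end

section
/- (Theorem 1, optimality of the label tokenizer.) Suppose M(x₁,x₂) > 0 implies y₁(x₁) = y₂(x₂). Then for every partition S of X₂ (with all blocks of positive mass) whose mask-induced error vanishes, α(S) = 0, one has ‖Ā_S‖_F² ≥ ‖Ā_{S^y}‖_F². Consequently, for any constants c₁, c₂ > 0, the label partition S^y minimizes the downstream error bound quantity c₁·‖Ā_S‖_F² + c₂·α(S) over all such partitions S. -/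
open Finset

/-- The squared Frobenius norm `‖Ā_S‖_F²`, which equals the sum of squared
eigenvalues `Σᵢ λᵢ²` of the symmetric matrix `Ā_S`. -/
noncomputable def frobSq {X₁ X₂ : Type*} [Fintype X₁] [Fintype X₂] [DecidableEq X₂]
    (M : X₁ → X₂ → ℝ) (S : Finpartition (univ : Finset X₂)) : ℝ :=
  ∑ x₁, ∑ x₁', (normAdj M S x₁ x₁') ^ 2

/-- **Theorem 1 (optimality of the label tokenizer).**  Suppose `M(x₁,x₂) > 0`
implies `y₁(x₁) = y₂(x₂)`.  Then every partition `S` of `X₂` (with all blocks of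
positive mass) whose mask-induced error vanishes satisfies
`‖Ā_S‖_F² ≥ ‖Ā_{S^y}‖_F²`.  Consequently, for any constants `c₁, c₂ > 0`, the label
partition `S^y` minimizes `c₁·‖Ā_S‖_F² + c₂·α(S)` over all such partitions `S`. -/
theorem labelPartition_optimal {X₁ X₂ Y : Type*} [Fintype X₁] [Fintype X₂] [Fintype Y]
    [DecidableEq X₂] [DecidableEq Y]
    (M : X₁ → X₂ → ℝ)
    (hM : ∀ x₁ x₂, 0 ≤ M x₁ x₂)
    (hsum : ∑ x₁, ∑ x₂, M x₁ x₂ = 1)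
    (hmarg : ∀ x₁, 0 < ∑ x₂, M x₁ x₂)
    (y₁ : X₁ → Y) (y₂ : X₂ → Y)
    (hcompat : ∀ x₁ x₂, 0 < M x₁ x₂ → y₁ x₁ = y₂ x₂)
    (hwy : ∀ p ∈ (labelPartition y₂).parts, 0 < ∑ x₁, ∑ x₂ ∈ p, M x₁ x₂) :
    (∀ S : Finpartition (univ : Finset X₂),
        (∀ p ∈ S.parts, 0 < ∑ x₁, ∑ x₂ ∈ p, M x₁ x₂) →
        maskError M S y₁ = 0 →
        frobSq M (labelPartition y₂) ≤ frobSq M S) ∧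
    (∀ c₁ c₂ : ℝ, 0 < c₁ → 0 < c₂ →
      ∀ S : Finpartition (univ : Finset X₂),
        (∀ p ∈ S.parts, 0 < ∑ x₁, ∑ x₂ ∈ p, M x₁ x₂) →
        maskError M S y₁ = 0 →
        c₁ * frobSq M (labelPartition y₂) + c₂ * maskError M (labelPartition y₂) y₁ ≤
          c₁ * frobSq M S + c₂ * maskError M S y₁) := by
  classical
  set w : X₁ → ℝ := fun x => ∑ x₂, M x x₂ with hwdef
  have hwpos : ∀ x, 0 < w x := hmarg
  -- M vanishes across labels
  have hMz : ∀ x₁ x₂, y₁ x₁ ≠ y₂ x₂ → M x₁ x₂ = 0 := by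
    intro x₁ x₂ h
    by_contra h'
    exact h (hcompat x₁ x₂ (lt_of_le_of_ne (hM x₁ x₂) (Ne.symm h')))
  -- fiber sums for the label partition
  have hMp : ∀ (c : Y) (x : X₁),
      (∑ x₂ ∈ univ.filter (fun b => y₂ b = c), M x x₂)
        = if y₁ x = c then w x else 0 := by
    intro c x
    by_cases h : y₁ x = c
    · rw [if_pos h]
      refine Finset.sum_subset (Finset.subset_univ _) ?_
      intro b _ hb
      simp only [mem_filter, mem_univ, true_and] at hb
      exact hMz x b (fun e => hb (h ▸ e.symm))
    · rw [if_neg h]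
      refine Finset.sum_eq_zero ?_
      intro b hb
      simp only [mem_filter, mem_univ, true_and] at hb
      exact hMz x b (by rw [hb]; exact h)
  -- every image label is attained by y₁ through positive mass
  have hy₁mem : ∀ x, y₁ x ∈ univ.image y₂ := by
    intro x
    obtain ⟨x₂, hx₂⟩ : ∃ x₂, 0 < M x x₂ := by
      by_contra hcon
      push_neg at hcon
      exact absurd (Finset.sum_nonpos (fun i _ => hcon i)) (not_le.mpr (hmarg x))
    exact mem_image.mpr ⟨x₂, mem_univ _, (hcompat x x₂ hx₂).symm⟩
  -- the parts of the label partition are the fibers of y₂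
  have hparts : (labelPartition y₂).parts
      = (univ.image y₂).image (fun c => univ.filter (fun b => y₂ b = c)) := by
    have h1 : (labelPartition y₂).parts
        = univ.image (fun a => univ.filter (fun b => y₂ a = y₂ b)) := rfl
    rw [h1, Finset.image_image]
    apply Finset.image_congr
    intro a _
    apply Finset.filter_congr
    intro b _
    simp [eq_comm]
  have hinj : ∀ c ∈ univ.image y₂, ∀ c' ∈ univ.image y₂,
      univ.filter (fun b => y₂ b = c) = univ.filter (fun b => y₂ b = c') → c = c' := by
    intro c hc c' _ h
    obtain ⟨b, _, rfl⟩ := mem_image.mp hc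
    have : b ∈ univ.filter (fun b' => y₂ b' = c') := by
      rw [← h]; simp
    simpa using (mem_filter.mp this).2
  set W : Y → ℝ := fun c => ∑ x, if y₁ x = c then w x else 0 with hWdef
  have hWfilter : ∀ c, W c = ∑ x ∈ univ.filter (fun x => y₁ x = c), w x := by
    intro c; rw [Finset.sum_filter]
  have hWpos : ∀ c ∈ univ.image y₂, 0 < W c := by
    intro c hc
    have hp : univ.filter (fun b => y₂ b = c) ∈ (labelPartition y₂).parts := by
      rw [hparts]; exact Finset.mem_image_of_mem _ hc
    have h2 := hwy _ hp
    have h3 : (∑ x₁, ∑ x₂ ∈ univ.filter (fun b => y₂ b = c), M x₁ x₂) = W c := by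
      refine Finset.sum_congr rfl fun x _ => hMp c x
    rwa [h3] at h2
  -- the augmentation weight of the label partition
  have haugL : ∀ x x', augWeight M (labelPartition y₂) x x'
      = if y₁ x = y₁ x' then w x * w x' / W (y₁ x) else 0 := by
    intro x x'
    rw [augWeight, hparts, Finset.sum_image hinj]
    have hterm : ∀ c ∈ univ.image y₂,
        (∑ x₂ ∈ univ.filter (fun b => y₂ b = c), M x x₂) *
            (∑ x₂ ∈ univ.filter (fun b => y₂ b = c), M x' x₂) /
          (∑ xx, ∑ x₂ ∈ univ.filter (fun b => y₂ b = c), M xx x₂)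
        = if c = y₁ x then (if y₁ x' = y₁ x then w x * w x' / W c else 0) else 0 := by
      intro c _
      have hden : (∑ xx, ∑ x₂ ∈ univ.filter (fun b => y₂ b = c), M xx x₂) = W c := by
        refine Finset.sum_congr rfl fun xx _ => hMp c xx
      rw [hMp c x, hMp c x', hden]
      by_cases h1 : c = y₁ x
      · subst h1
        by_cases h2 : y₁ x' = y₁ x <;> simp [h2]
      · rw [if_neg (fun e : y₁ x = c => h1 e.symm), zero_mul, zero_div, if_neg h1]
    rw [Finset.sum_congr rfl hterm, Finset.sum_ite_eq' (univ.image y₂) (y₁ x)]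
    rw [if_pos (hy₁mem x)]
    by_cases h : y₁ x = y₁ x'
    · rw [if_pos h, if_pos h.symm]
    · rw [if_neg h, if_neg (fun e => h e.symm)]
  -- the label partition has zero mask error
  have hmaskL : maskError M (labelPartition y₂) y₁ = 0 := by
    rw [maskError]
    refine Finset.sum_eq_zero fun x _ => Finset.sum_eq_zero fun x' _ => ?_
    by_cases h : y₁ x = y₁ x'
    · simp [h]
    · simp [h, haugL x x']
  -- squared normalized adjacency of the label partition
  have hnL : ∀ x x', (normAdj M (labelPartition y₂) x x') ^ 2
      = if y₁ x = y₁ x' then w x * w x' / (W (y₁ x)) ^ 2 else 0 := by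
    intro x x'
    rw [normAdj, haugL]
    by_cases h : y₁ x = y₁ x'
    · rw [if_pos h, if_pos h, div_pow, div_pow,
        Real.sq_sqrt (le_of_lt (mul_pos (hwpos x) (hwpos x')))]
      have hWc : (W (y₁ x)) ≠ 0 := ne_of_gt (hWpos _ (hy₁mem x))
      have hww : (w x * w x') ≠ 0 := ne_of_gt (mul_pos (hwpos x) (hwpos x'))
      field_simp
    · simp [h]
  -- frobSq of label partition = number of labels in the image
  have hfrobL : frobSq M (labelPartition y₂) = ((univ.image y₂).card : ℝ) := by
    rw [frobSq]
    have hentry : ∀ x x' : X₁, (normAdj M (labelPartition y₂) x x') ^ 2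
        = ∑ c ∈ univ.image y₂,
            (if y₁ x = c then w x / W c else 0) * (if y₁ x' = c then w x' / W c else 0) := by
      intro x x'
      rw [hnL]
      have : ∀ c ∈ univ.image y₂,
          (if y₁ x = c then w x / W c else 0) * (if y₁ x' = c then w x' / W c else 0)
          = if c = y₁ x then (if y₁ x' = y₁ x then w x * w x' / (W c)^2 else 0) else 0 := by
        intro c _
        by_cases h1 : c = y₁ x
        · subst h1
          by_cases h2 : y₁ x' = y₁ x <;> simp [h2] <;> ring_nf <;> rw [sq] <;> ring
        · rw [if_neg (fun e : y₁ x = c => h1 e.symm), zero_mul, if_neg h1]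
      rw [Finset.sum_congr rfl this, Finset.sum_ite_eq' (univ.image y₂) (y₁ x),
        if_pos (hy₁mem x)]
      by_cases h : y₁ x = y₁ x'
      · rw [if_pos h, if_pos h.symm]
      · rw [if_neg h, if_neg (fun e => h e.symm)]
    calc ∑ x, ∑ x', (normAdj M (labelPartition y₂) x x') ^ 2
        = ∑ x, ∑ x', ∑ c ∈ univ.image y₂,
            (if y₁ x = c then w x / W c else 0) * (if y₁ x' = c then w x' / W c else 0) := by
          exact Finset.sum_congr rfl fun x _ => Finset.sum_congr rfl fun x' _ => hentry x x'
      _ = ∑ c ∈ univ.image y₂, ∑ x, ∑ x',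
            (if y₁ x = c then w x / W c else 0) * (if y₁ x' = c then w x' / W c else 0) := by
          rw [show (∑ x : X₁, ∑ x' : X₁, ∑ c ∈ univ.image y₂,
              (if y₁ x = c then w x / W c else 0) * (if y₁ x' = c then w x' / W c else 0))
              = ∑ x : X₁, ∑ c ∈ univ.image y₂, ∑ x' : X₁,
              (if y₁ x = c then w x / W c else 0) * (if y₁ x' = c then w x' / W c else 0) from
            Finset.sum_congr rfl fun x _ => Finset.sum_comm]
          exact Finset.sum_comm
      _ = ∑ c ∈ univ.image y₂,
            (∑ x, if y₁ x = c then w x / W c else 0) * (∑ x', if y₁ x' = c then w x' / W c else 0) := by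
          exact Finset.sum_congr rfl fun c _ => (Finset.sum_mul_sum _ _ _ _).symm
      _ = ∑ c ∈ univ.image y₂, (1:ℝ) := by
          refine Finset.sum_congr rfl fun c hc => ?_
          have h1 : (∑ x, if y₁ x = c then w x / W c else 0) = 1 := by
            have : (∑ x, if y₁ x = c then w x / W c else 0)
                = (∑ x, if y₁ x = c then w x else 0) / W c := by
              rw [Finset.sum_div]
              exact Finset.sum_congr rfl fun x _ => by split <;> simp
            rw [this]
            exact div_self (ne_of_gt (hWpos c hc))
          rw [h1]; norm_num
      _ = ((univ.image y₂).card : ℝ) := by rw [Finset.sum_const, nsmul_eq_mul, mul_one]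
  -- main inequality
  have hmain : ∀ S : Finpartition (univ : Finset X₂),
      (∀ p ∈ S.parts, 0 < ∑ x₁, ∑ x₂ ∈ p, M x₁ x₂) →
      maskError M S y₁ = 0 →
      frobSq M (labelPartition y₂) ≤ frobSq M S := by
    intro S hS hα
    -- nonnegativity of augWeight
    have haug_nonneg : ∀ x x', 0 ≤ augWeight M S x x' := by
      intro x x'
      refine Finset.sum_nonneg fun p _ => ?_
      refine div_nonneg (mul_nonneg ?_ ?_) ?_ <;>
        exact Finset.sum_nonneg fun i _ => (by first
          | exact hM x i | exact hM x' i | exact Finset.sum_nonneg fun j _ => hM i j)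
    -- augWeight vanishes on distinct labels
    have hAzero : ∀ x x', y₁ x ≠ y₁ x' → augWeight M S x x' = 0 := by
      intro x x' hne
      have h1 : ∀ x₀ ∈ (univ : Finset X₁),
          0 ≤ ∑ x', if y₁ x₀ ≠ y₁ x' then augWeight M S x₀ x' else 0 := by
        intro x₀ _
        refine Finset.sum_nonneg fun x' _ => ?_
        split
        · exact haug_nonneg x₀ x'
        · exact le_rfl
      have h2 := (Finset.sum_eq_zero_iff_of_nonneg h1).mp hα x (mem_univ x)
      have h3 : ∀ x'' ∈ (univ : Finset X₁),
          0 ≤ if y₁ x ≠ y₁ x'' then augWeight M S x x'' else 0 := by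
        intro x'' _
        split
        · exact haug_nonneg x x''
        · exact le_rfl
      have h4 := (Finset.sum_eq_zero_iff_of_nonneg h3).mp h2 x' (mem_univ x')
      rwa [if_pos hne] at h4
    -- row sums of augWeight equal the marginal
    have hrow : ∀ x, ∑ x', augWeight M S x x' = w x := by
      intro x
      rw [show (∑ x', augWeight M S x x')
          = ∑ p ∈ S.parts, ∑ x',
            (∑ x₂ ∈ p, M x x₂) * (∑ x₂ ∈ p, M x' x₂) / (∑ xx, ∑ x₂ ∈ p, M xx x₂) from
        Finset.sum_comm]
      have h1 : ∀ p ∈ S.parts,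
          (∑ x', (∑ x₂ ∈ p, M x x₂) * (∑ x₂ ∈ p, M x' x₂) / (∑ xx, ∑ x₂ ∈ p, M xx x₂))
          = ∑ x₂ ∈ p, M x x₂ := by
        intro p hp
        have e1 : (∑ x', (∑ x₂ ∈ p, M x x₂) * (∑ x₂ ∈ p, M x' x₂) / (∑ xx, ∑ x₂ ∈ p, M xx x₂))
            = (∑ x₂ ∈ p, M x x₂) * (∑ x', ∑ x₂ ∈ p, M x' x₂) / (∑ xx, ∑ x₂ ∈ p, M xx x₂) := by
          rw [Finset.mul_sum, Finset.sum_div]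
        rw [e1, mul_div_assoc, div_self (ne_of_gt (hS p hp)), mul_one]
      rw [Finset.sum_congr rfl h1]
      -- sum over parts of a partition
      have h2 := Finset.sum_biUnion (f := fun x₂ => M x x₂)
        (Finset.supIndep_iff_pairwiseDisjoint.mp S.supIndep)
      rw [S.biUnion_parts] at h2
      exact h2.symm
    -- per-class Cauchy–Schwarz bound
    have hclass : ∀ c ∈ univ.image y₂,
        (1:ℝ) ≤ ∑ z ∈ (univ.filter (fun x => y₁ x = c)) ×ˢ (univ.filter (fun x => y₁ x = c)),
          (normAdj M S z.1 z.2) ^ 2 := by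
      intro c hc
      set A := univ.filter (fun x => y₁ x = c) with hA
      have hsqrt_pos : ∀ x x' : X₁, 0 < Real.sqrt (w x * w x') := fun x x' =>
        Real.sqrt_pos.mpr (mul_pos (hwpos x) (hwpos x'))
      -- sum of augWeight over the class square
      have hAsum : ∑ z ∈ A ×ˢ A, augWeight M S z.1 z.2 = W c := by
        rw [Finset.sum_product]
        have h1 : ∀ x ∈ A, ∑ x' ∈ A, augWeight M S x x' = w x := by
          intro x hx
          have hx' : y₁ x = c := (mem_filter.mp hx).2
          rw [show (∑ x' ∈ A, augWeight M S x x') = ∑ x', augWeight M S x x' from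
            Finset.sum_subset (Finset.subset_univ _) (fun x' _ hx'' => by
              refine hAzero x x' fun e => hx'' ?_
              simp only [hA, mem_filter, mem_univ, true_and]
              rw [← e, hx'])]
          exact hrow x
        rw [Finset.sum_congr rfl h1, ← hWfilter]
      -- Cauchy–Schwarz
      have hCS := Finset.sum_mul_sq_le_sq_mul_sq (A ×ˢ A)
        (fun z => Real.sqrt (w z.1 * w z.2)) (fun z => normAdj M S z.1 z.2)
      have hfg : ∀ z ∈ A ×ˢ A,
          Real.sqrt (w z.1 * w z.2) * normAdj M S z.1 z.2 = augWeight M S z.1 z.2 := by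
        intro z _
        rw [normAdj]
        rw [mul_div_cancel₀]
        exact ne_of_gt (hsqrt_pos z.1 z.2)
      have hf2 : ∀ z ∈ A ×ˢ A, (Real.sqrt (w z.1 * w z.2)) ^ 2 = w z.1 * w z.2 := by
        intro z _
        exact Real.sq_sqrt (le_of_lt (mul_pos (hwpos z.1) (hwpos z.2)))
      rw [Finset.sum_congr rfl hfg, Finset.sum_congr rfl hf2, hAsum] at hCS
      have hww : ∑ z ∈ A ×ˢ A, w z.1 * w z.2 = (W c) ^ 2 := by
        rw [Finset.sum_product, ← Finset.sum_mul_sum, ← hWfilter, sq]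
      rw [hww] at hCS
      have hWc := hWpos c hc
      have hW2 : (0:ℝ) < (W c) ^ 2 := by positivity
      nlinarith [hCS, hW2]
    -- assemble
    rw [hfrobL]
    have hdisj : (↑(univ.image y₂) : Set Y).PairwiseDisjoint
        (fun c => (univ.filter (fun x => y₁ x = c)) ×ˢ (univ.filter (fun x => y₁ x = c))) := by
      intro c _ d _ hcd
      refine Finset.disjoint_left.mpr fun z hz hz' => ?_
      have h1 := (mem_filter.mp (Finset.mem_product.mp hz).1).2
      have h2 := (mem_filter.mp (Finset.mem_product.mp hz').1).2
      exact hcd (h1 ▸ h2 ▸ rfl)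
    calc ((univ.image y₂).card : ℝ)
        = ∑ c ∈ univ.image y₂, (1:ℝ) := by rw [Finset.sum_const, nsmul_eq_mul, mul_one]
      _ ≤ ∑ c ∈ univ.image y₂,
            ∑ z ∈ (univ.filter (fun x => y₁ x = c)) ×ˢ (univ.filter (fun x => y₁ x = c)),
              (normAdj M S z.1 z.2) ^ 2 := Finset.sum_le_sum hclass
      _ = ∑ z ∈ (univ.image y₂).biUnion
            (fun c => (univ.filter (fun x => y₁ x = c)) ×ˢ (univ.filter (fun x => y₁ x = c))),
              (normAdj M S z.1 z.2) ^ 2 := (Finset.sum_biUnion hdisj).symm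
      _ ≤ ∑ z ∈ (univ : Finset X₁) ×ˢ (univ : Finset X₁), (normAdj M S z.1 z.2) ^ 2 := by
          refine Finset.sum_le_sum_of_subset_of_nonneg ?_ (fun _ _ _ => sq_nonneg _)
          rw [Finset.univ_product_univ]
          exact Finset.subset_univ _
      _ = frobSq M S := by rw [frobSq, Finset.sum_product]
  refine ⟨hmain, fun c₁ c₂ hc₁ hc₂ S hS hα => ?_⟩
  rw [hmaskL, hα, mul_zero, add_zero, add_zero]
  exact mul_le_mul_of_nonneg_left (hmain S hS hα) (le_of_lt hc₁)
end

section
/- Let R̄ ∈ ℝ^{l₁×l₂} be row-stochastic and let C = R̄·R̄ᵀ. Then the Token-Class Alignment Similarity M(R̄) = (1/l₁)·Σ_{i=1}^{l₁}(1 − C_{ii})² + (1/l₁²)·Σ_{i≠i'} C_{ii'}² satisfies M(R̄) ≥ 0, and M(R̄) = 0 if and only if C equals the identity matrix I_{l₁×l₁}, which holds if and only if every row R̄(i) is a standard basis vector of ℝ^{l₂} and distinct rows are orthogonal (equivalently, distinct rows are distinct basis vectors). -/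
open Finset

/-- The Token-Class Alignment Similarity (TCAS) of a token-class co-occurrence
matrix `R̄ ∈ ℝ^{l₁ × l₂}` with `C = R̄·R̄ᵀ`:
`M(R̄) = (1/l₁)·Σᵢ (1 − Cᵢᵢ)² + (1/l₁²)·Σ_{i ≠ i'} C_{ii'}²`. -/
noncomputable def TCAS {l₁ l₂ : ℕ} (R : Matrix (Fin l₁) (Fin l₂) ℝ) : ℝ :=
  (1 / (l₁ : ℝ)) * ∑ i, (1 - (R * R.transpose) i i) ^ 2 +
    (1 / (l₁ : ℝ) ^ 2) * ∑ i, ∑ i', if i ≠ i' then ((R * R.transpose) i i') ^ 2 else 0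

/-- For a row-stochastic `R̄` with `C = R̄·R̄ᵀ`, the TCAS metric is nonnegative, and
it is zero iff `C = I`, which holds iff every row of `R̄` is a standard basis vector
and distinct rows are orthogonal (equivalently, distinct rows are distinct basis
vectors). -/
theorem tcas_nonneg_and_eq_zero_iff {l₁ l₂ : ℕ} (R : Matrix (Fin l₁) (Fin l₂) ℝ)
    (hnn : ∀ i j, 0 ≤ R i j) (hrow : ∀ i, ∑ j, R i j = 1) :
    0 ≤ TCAS R ∧
    (TCAS R = 0 ↔ R * R.transpose = 1) ∧
    (R * R.transpose = 1 ↔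
      ((∀ i, ∃ j, ∀ j', R i j' = if j' = j then 1 else 0) ∧
        ∀ i i', i ≠ i' → ∑ j, R i j * R i' j = 0)) ∧
    (R * R.transpose = 1 ↔
      ((∀ i, ∃ j, ∀ j', R i j' = if j' = j then 1 else 0) ∧
        Function.Injective fun i => R i)) := by
  have hC : ∀ i i', (R * R.transpose) i i' = ∑ j, R i j * R i' j := by
    intro i i'
    simp [Matrix.mul_apply, Matrix.transpose_apply]
  have hle : ∀ i j, R i j ≤ 1 := by
    intro i j
    calc R i j ≤ ∑ j', R i j' :=
          Finset.single_le_sum (fun j' _ => hnn i j') (mem_univ j)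
      _ = 1 := hrow i
  -- diagonal characterization
  have hdiag : ∀ i, (∑ j, R i j * R i j) = 1 ↔
      ∃ j, ∀ j', R i j' = if j' = j then 1 else 0 := by
    intro i
    constructor
    · intro h
      have h01 : ∀ j, R i j = 0 ∨ R i j = 1 := by
        have hsum : ∑ j, R i j * (1 - R i j) = 0 := by
          have e : ∑ j, R i j * (1 - R i j)
              = (∑ j, R i j) - ∑ j, R i j * R i j := by
            rw [← Finset.sum_sub_distrib]
            congr 1; funext j; ring
          rw [e, hrow i, h]; ring
        intro j
        have hz := (Finset.sum_eq_zero_iff_of_nonneg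
          (fun j _ => mul_nonneg (hnn i j) (by linarith [hle i j]))).mp hsum j (mem_univ j)
        rcases mul_eq_zero.mp hz with h0 | h1
        · exact Or.inl h0
        · exact Or.inr (by linarith)
      have hex : ∃ j, R i j = 1 := by
        by_contra hno
        push_neg at hno
        have : ∀ j ∈ Finset.univ, R i j = 0 := by
          intro j _
          rcases h01 j with h0 | h1
          · exact h0
          · exact absurd h1 (hno j)
        have := hrow i
        rw [Finset.sum_eq_zero ‹∀ j ∈ Finset.univ, R i j = 0›] at this
        norm_num at this
      obtain ⟨j, hj⟩ := hex
      refine ⟨j, fun j' => ?_⟩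
      by_cases hjj : j' = j
      · simp [hjj, hj]
      · simp only [if_neg hjj]
        have hsplit : ∑ x ∈ Finset.univ.erase j, R i x + R i j = ∑ x, R i x :=
          Finset.sum_erase_add _ _ (mem_univ j)
        rw [hrow i, hj] at hsplit
        have hz : ∑ x ∈ Finset.univ.erase j, R i x = 0 := by linarith
        exact (Finset.sum_eq_zero_iff_of_nonneg
          (fun x _ => hnn i x)).mp hz j' (Finset.mem_erase.mpr ⟨hjj, mem_univ j'⟩)
    · rintro ⟨j, hj⟩
      simp [hj, mul_ite, ite_mul]
  -- equivalence with basis + orthogonality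
  have hiff1 : R * R.transpose = 1 ↔
      ((∀ i, ∃ j, ∀ j', R i j' = if j' = j then 1 else 0) ∧
        ∀ i i', i ≠ i' → ∑ j, R i j * R i' j = 0) := by
    constructor
    · intro hP
      constructor
      · intro i
        apply (hdiag i).mp
        rw [← hC i i, hP, Matrix.one_apply_eq]
      · intro i i' hne
        rw [← hC i i', hP, Matrix.one_apply_ne hne]
    · rintro ⟨hb, ho⟩
      ext i i'
      by_cases hii : i = i'
      · subst hii
        rw [hC i i, Matrix.one_apply_eq]
        exact (hdiag i).mpr (hb i)
      · rw [hC i i', Matrix.one_apply_ne hii, ho i i' hii]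
  -- given basis rows, orthogonality ↔ injectivity
  have hiff2 : R * R.transpose = 1 ↔
      ((∀ i, ∃ j, ∀ j', R i j' = if j' = j then 1 else 0) ∧
        Function.Injective fun i => R i) := by
    rw [hiff1]
    constructor
    · rintro ⟨hb, ho⟩
      refine ⟨hb, fun i i' hR => ?_⟩
      by_contra hne
      have h0 := ho i i' hne
      have h1 : (∑ j, R i j * R i' j) = 1 := by
        have : (fun j => R i j) = fun j => R i' j := by
          simpa using hR
        have e : ∀ j, R i j = R i' j := fun j => congrFun this j
        rw [show (∑ j, R i j * R i' j) = ∑ j, R i j * R i j by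
          apply Finset.sum_congr rfl; intro j _; rw [e j]]
        exact (hdiag i).mpr (hb i)
      linarith
    · rintro ⟨hb, hinj⟩
      refine ⟨hb, fun i i' hne => ?_⟩
      obtain ⟨j, hj⟩ := hb i
      obtain ⟨j', hj'⟩ := hb i'
      have hjj : j ≠ j' := by
        intro h
        apply hne
        apply hinj
        funext x
        simp only
        rw [hj x, hj' x, h]
      apply Finset.sum_eq_zero
      intro x _
      rw [hj x, hj' x]
      by_cases hx : x = j
      · have : x ≠ j' := by rw [hx]; exact hjj
        simp [hx, this, hjj]
      · simp [hx]
  -- nonnegativity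
  have hn1 : (0:ℝ) ≤ ∑ i, (1 - (R * R.transpose) i i) ^ 2 :=
    Finset.sum_nonneg fun i _ => sq_nonneg _
  have hn2 : (0:ℝ) ≤ ∑ i, ∑ i',
      if i ≠ i' then ((R * R.transpose) i i') ^ 2 else 0 := by
    apply Finset.sum_nonneg
    intro i _
    apply Finset.sum_nonneg
    intro i' _
    by_cases h : i ≠ i' <;> simp [h, sq_nonneg]
  have hc1 : (0:ℝ) ≤ 1 / (l₁ : ℝ) := by positivity
  have hc2 : (0:ℝ) ≤ 1 / (l₁ : ℝ) ^ 2 := by positivity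
  have hnonneg : 0 ≤ TCAS R := by
    unfold TCAS
    exact add_nonneg (mul_nonneg hc1 hn1) (mul_nonneg hc2 hn2)
  refine ⟨hnonneg, ?_, hiff1, hiff2⟩
  constructor
  · intro hz
    rcases Nat.eq_zero_or_pos l₁ with hl | hl
    · subst hl
      ext i i'
      exact i.elim0
    · have hlpos : (0:ℝ) < (l₁:ℝ) := by exact_mod_cast hl
      unfold TCAS at hz
      have hz1 : ∑ i, (1 - (R * R.transpose) i i) ^ 2 = 0 := by
        have h1 : (1 / (l₁ : ℝ)) * ∑ i, (1 - (R * R.transpose) i i) ^ 2 = 0 := by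
          nlinarith [mul_nonneg hc1 hn1, mul_nonneg hc2 hn2]
        have := mul_eq_zero.mp h1
        rcases this with h | h
        · exact absurd h (by positivity)
        · exact h
      have hz2 : ∑ i, ∑ i',
          (if i ≠ i' then ((R * R.transpose) i i') ^ 2 else 0) = 0 := by
        have h2 : (1 / (l₁ : ℝ) ^ 2) * ∑ i, ∑ i',
            (if i ≠ i' then ((R * R.transpose) i i') ^ 2 else 0) = 0 := by
          nlinarith [mul_nonneg hc1 hn1, mul_nonneg hc2 hn2]
        rcases mul_eq_zero.mp h2 with h | h
        · exact absurd h (by positivity)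
        · exact h
      ext i i'
      by_cases hii : i = i'
      · subst hii
        have := (Finset.sum_eq_zero_iff_of_nonneg
          (fun i _ => sq_nonneg (1 - (R * R.transpose) i i))).mp hz1 i (mem_univ i)
        have h1 : (1 : ℝ) - (R * R.transpose) i i = 0 := by
          exact pow_eq_zero_iff (by norm_num) |>.mp this
        rw [Matrix.one_apply_eq]
        linarith
      · have hrow0 := (Finset.sum_eq_zero_iff_of_nonneg (fun i _ =>
          Finset.sum_nonneg fun i' _ => by
            by_cases h : i ≠ i' <;> simp [h, sq_nonneg])).mp hz2 i (mem_univ i)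
        have hterm := (Finset.sum_eq_zero_iff_of_nonneg (fun i' _ => by
          by_cases h : i ≠ i' <;> simp [h, sq_nonneg])).mp hrow0 i' (mem_univ i')
        rw [if_pos hii] at hterm
        have : (R * R.transpose) i i' = 0 :=
          pow_eq_zero_iff (by norm_num) |>.mp hterm
        rw [Matrix.one_apply_ne hii, this]
  · intro hP
    unfold TCAS
    rw [hP]
    have e1 : ∑ i, (1 - (1 : Matrix (Fin l₁) (Fin l₁) ℝ) i i) ^ 2 = 0 := by
      apply Finset.sum_eq_zero
      intro i _
      rw [Matrix.one_apply_eq]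
      ring
    have e2 : ∑ i, ∑ i',
        (if i ≠ i' then ((1 : Matrix (Fin l₁) (Fin l₁) ℝ) i i') ^ 2 else 0) = 0 := by
      apply Finset.sum_eq_zero
      intro i _
      apply Finset.sum_eq_zero
      intro i' _
      by_cases h : i = i'
      · simp [h]
      · rw [if_pos h, Matrix.one_apply_ne h]
        ring
    rw [e1, e2]
    ring
end

section
/- There exists ε > 0 such that for all t with 0 < t < ε, the class-wise bound is strictly smaller than the MAE-like bound: 2 − (9/2)t + (39/4)t² − (29/2)t³ + (53/4)t⁴ − (95/16)t⁵ + (15/16)t⁶ < 2 − (15/4)t + (9/2)t² − (11/4)t³ + t⁴. -/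
/-- For sufficiently small overlap ratio `t > 0`, the downstream error bound of
class-wise tokenization is strictly smaller than that of MAE-like tokenization in
the two-class toy model. -/
theorem classwise_lt_mae_bound :
    ∃ ε > 0, ∀ t : ℝ, 0 < t → t < ε →
      2 - (9 / 2) * t + (39 / 4) * t ^ 2 - (29 / 2) * t ^ 3 + (53 / 4) * t ^ 4 -
          (95 / 16) * t ^ 5 + (15 / 16) * t ^ 6 <
        2 - (15 / 4) * t + (9 / 2) * t ^ 2 - (11 / 4) * t ^ 3 + t ^ 4 := by
  refine ⟨1/10, by norm_num, fun t ht hlt => ?_⟩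
  nlinarith [pow_pos ht 2, pow_pos ht 3, pow_pos ht 4, pow_pos ht 5, pow_pos ht 6,
    mul_pos ht ht, sq_nonneg t, sq_nonneg (t^2), sq_nonneg (t^3),
    mul_lt_mul_of_pos_left hlt ht,
    mul_lt_mul_of_pos_left hlt (pow_pos ht 2),
    mul_lt_mul_of_pos_left hlt (pow_pos ht 3),
    mul_lt_mul_of_pos_left hlt (pow_pos ht 4),
    mul_lt_mul_of_pos_left hlt (pow_pos ht 5)]
end

section
/- For all real numbers n, m with 0 < m < n, the ratio of intra-class to inter-class edge weight is strictly larger under class-wise tokenization than under MAE-like tokenization: [((n − m/2)² + (m/2)²)/(2n⁴)] / [m(n − m/2)/(4n⁴)] > [(2n − m)/(4n³)] / [m/(4n³)]; equivalently, 2((n − m/2)² + (m/2)²)/(m(n − m/2)) > (2n − m)/m. -/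
/-- In the two-class toy model, the ratio of intra-class to inter-class edge weight
is strictly larger under class-wise tokenization than under MAE-like tokenization. -/
theorem classwise_ratio_gt_mae_ratio (n m : ℝ) (hm : 0 < m) (hmn : m < n) :
    (((n - m / 2) ^ 2 + (m / 2) ^ 2) / (2 * n ^ 4)) / (m * (n - m / 2) / (4 * n ^ 4)) >
      ((2 * n - m) / (4 * n ^ 3)) / (m / (4 * n ^ 3)) ∧
    2 * ((n - m / 2) ^ 2 + (m / 2) ^ 2) / (m * (n - m / 2)) > (2 * n - m) / m := by
  have hn : 0 < n := hm.trans hmn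
  have ha : 0 < n - m / 2 := by linarith
  constructor
  · rw [gt_iff_lt, div_lt_div_iff₀ (by positivity) (by positivity)]
    ring_nf
    nlinarith [mul_pos (pow_pos hm 3) (pow_pos (inv_pos.mpr hn) 7)]
  · rw [gt_iff_lt, div_lt_div_iff₀ hm (by positivity)]
    nlinarith [pow_pos hm 3]
end
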